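/- In the five-point example, a stochastic attack strictly beats all deterministic attacks in the maximin game: with 𝒳 = 𝒴 = {0,1,2,3,4}, P_{X,Y} uniform on {(0,0),(2,2),(4,4)}, distortion d(x,z)=|x−z| with limit ε=1, the maximin value over randomized perturbation channels equals the binary entropy h₂(1/3), while the maximin value over deterministic perturbation maps g with |x − g(x,y)| ≤ 1 equals (2/3)·log 2, and (2/3)·log 2 < h₂(1/3). -/

import Mathlib

open scoped BigOperators

/-- The data distribution: uniform on `{(0,0), (2,2), (4,4)} ⊆ {0,…,4}²`. -/
noncomputable def Pex : Fin 5 × Fin 5 → ℝ := fun a =>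
  if a = (0, 0) ∨ a = (2, 2) ∨ a = (4, 4) then 1/3 else 0

/-- `r` is a perturbation channel `P_{Z|X,Y}`. -/
def IsChannel (r : Fin 5 × Fin 5 → Fin 5 → ℝ) : Prop :=
  (∀ a z, 0 ≤ r a z) ∧ ∀ a, ∑ z, r a z = 1

/-- Joint law of `(Y, Z)` induced by `Pex` and channel `r`. -/
noncomputable def jointYZ (r : Fin 5 × Fin 5 → Fin 5 → ℝ) : Fin 5 × Fin 5 → ℝ :=
  fun a => ∑ x, Pex (x, a.1) * r (x, a.1) a.2

/-- Joint law of `(Y, Z)` induced by `Pex` and a deterministic perturbation `g`. -/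
noncomputable def jointYZdet (g : Fin 5 × Fin 5 → Fin 5) : Fin 5 × Fin 5 → ℝ :=
  fun a => ∑ x, if g (x, a.1) = a.2 then Pex (x, a.1) else 0

/-- Conditional entropy `H(Y|Z)` of a joint law on `𝒴 × 𝒵 = Fin 5 × Fin 5`. -/
noncomputable def condEntYZ (j : Fin 5 × Fin 5 → ℝ) : ℝ :=
  -∑ a, j a * Real.log (j a / ∑ y, j (y, a.2))

/-- Binary entropy function (natural log). -/
noncomputable def h2 (p : ℝ) : ℝ := -p * Real.log p - (1 - p) * Real.log (1 - p)

/-! ### Auxiliary lemmas -/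

noncomputable def phi (b c : ℝ) : ℝ :=
  -(b * Real.log (b / (b + c))) - c * Real.log (c / (b + c))

lemma self_term (x : ℝ) : x * Real.log (x / x) = 0 := by
  rcases eq_or_ne x 0 with h | h
  · simp [h]
  · simp [div_self h]

/-- Expansion of the conditional entropy for joints supported on the seven allowed cells. -/
lemma expandA (j : Fin 5 × Fin 5 → ℝ)
    (h1 : ∀ z, j (1, z) = 0) (h3 : ∀ z, j (3, z) = 0)
    (h02 : j (0,2) = 0) (h03 : j (0,3) = 0) (h04 : j (0,4) = 0)
    (h20 : j (2,0) = 0) (h24 : j (2,4) = 0)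
    (h40 : j (4,0) = 0) (h41 : j (4,1) = 0) (h42 : j (4,2) = 0) :
    condEntYZ j = phi (j (0,1)) (j (2,1)) + phi (j (2,3)) (j (4,3)) := by
  simp only [condEntYZ, Fintype.sum_prod_type, Fin.sum_univ_five,
    h1, h3, h02, h03, h04, h20, h24, h40, h41, h42,
    zero_mul, add_zero, zero_add]
  rw [self_term, self_term, self_term]
  unfold phi
  ring

lemma gibbs_term (x t q : ℝ) (hx : 0 ≤ x) (hxt : x ≤ t) (hq : 0 < q) :
    -(x * Real.log (x / t)) ≤ -(x * Real.log q) + (q * t - x) := by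
  have ht0 : 0 ≤ t := le_trans hx hxt
  rcases eq_or_lt_of_le hx with h | h
  · simp only [← h, zero_mul, neg_zero, sub_zero, zero_add]
    exact mul_nonneg hq.le ht0
  · have ht : 0 < t := lt_of_lt_of_le h hxt
    have hpos : 0 < q * t / x := by positivity
    have hlog := Real.log_le_sub_one_of_pos hpos
    have h1 : Real.log (q * t / x) = Real.log q + Real.log t - Real.log x := by
      rw [Real.log_div (by positivity) (ne_of_gt h), Real.log_mul (ne_of_gt hq) (ne_of_gt ht)]
    have h2 : Real.log (x / t) = Real.log x - Real.log t :=
      Real.log_div (ne_of_gt h) (ne_of_gt ht)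
    have h3 : x * (Real.log q + Real.log t - Real.log x) ≤ x * (q * t / x - 1) := by
      rw [← h1]; exact mul_le_mul_of_nonneg_left hlog hx
    have h4 : x * (q * t / x - 1) = q * t - x := by field_simp
    rw [h2]; nlinarith [h3, h4]

lemma phiB (b c : ℝ) (hb : 0 ≤ b) (hc : 0 ≤ c) :
    phi b c ≤ b * Real.log (3/2) + c * Real.log 3 := by
  have h1 := gibbs_term b (b + c) (2/3) hb (by linarith) (by norm_num)
  have h2 := gibbs_term c (b + c) (1/3) hc (by linarith) (by norm_num)
  have e1 : Real.log (2/3 : ℝ) = -Real.log (3/2) := by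
    rw [← Real.log_inv]; norm_num
  have e2 : Real.log (1/3 : ℝ) = -Real.log 3 := by
    rw [← Real.log_inv]; norm_num
  unfold phi
  rw [e1] at h1; rw [e2] at h2
  linarith

lemma phi_comm (b c : ℝ) : phi b c = phi c b := by
  unfold phi; rw [add_comm c b]; ring

lemma phi_left0 (c : ℝ) : phi 0 c = 0 := by
  rcases eq_or_ne c 0 with h | h
  · simp [phi, h]
  · simp [phi, div_self h]

lemma phi_third : phi (1/3) (1/3) = (2/3) * Real.log 2 := by
  unfold phi
  have h1 : ((1:ℝ)/3) / (1/3 + 1/3) = 1/2 := by norm_num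
  rw [h1]
  have h2 : Real.log (1/2 : ℝ) = -Real.log 2 := by rw [← Real.log_inv]; norm_num
  rw [h2]; ring

lemma phiD (b c : ℝ) (hb : b = 0 ∨ b = 1/3) (hc : c = 0 ∨ c = 1/3) :
    phi b c ≤ (2/3) * Real.log 2 := by
  have hlog : 0 ≤ Real.log 2 := Real.log_nonneg (by norm_num)
  rcases hb with hb | hb <;> rcases hc with hc | hc <;> subst hb <;> subst hc
  · rw [phi_left0]; linarith
  · rw [phi_left0]; linarith
  · rw [phi_comm, phi_left0]; linarith
  · rw [phi_third]

lemma h2_third : h2 (1/3) = Real.log 3 - (2/3) * Real.log 2 := by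
  unfold h2
  have e2 : Real.log (1/3 : ℝ) = -Real.log 3 := by rw [← Real.log_inv]; norm_num
  have e3 : Real.log (2/3 : ℝ) = Real.log 2 - Real.log 3 :=
    Real.log_div (by norm_num) (by norm_num)
  rw [show (1:ℝ) - 1/3 = 2/3 by norm_num, e2, e3]; ring

lemma key_lt : (2/3) * Real.log 2 < h2 (1/3) := by
  rw [h2_third]
  have h16 : Real.log (16:ℝ) < Real.log 27 := Real.log_lt_log (by norm_num) (by norm_num)
  have e16 : Real.log (16:ℝ) = 4 * Real.log 2 := by
    rw [show (16:ℝ) = 2^4 by norm_num, Real.log_pow]; norm_num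
  have e27 : Real.log (27:ℝ) = 3 * Real.log 3 := by
    rw [show (27:ℝ) = 3^3 by norm_num, Real.log_pow]; norm_num
  linarith

/-! ### The optimal stochastic attack -/

noncomputable def r0 : Fin 5 × Fin 5 → Fin 5 → ℝ := fun a z =>
  if a = (2,2) then (if z = 1 ∨ z = 3 then 1/2 else 0)
  else if a = (0,0) then (if z = 1 then 1 else 0)
  else if a = (4,4) then (if z = 3 then 1 else 0)
  else if z = a.1 then 1 else 0

lemma r0_channel : IsChannel r0 := by
  constructor
  · intro a z; unfold r0; split_ifs <;> norm_num
  · intro a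
    by_cases h1 : a = (2,2)
    · simp [r0, h1, Fin.sum_univ_five]; norm_num
    by_cases h2 : a = (0,0)
    · simp [r0, h1, h2, Fin.sum_univ_five, Prod.ext_iff]
    by_cases h3 : a = (4,4)
    · simp [r0, h1, h2, h3, Fin.sum_univ_five, Prod.ext_iff]
    · simp [r0, h1, h2, h3, Finset.sum_ite_eq']

lemma r0_dist : ∀ x y z : Fin 5, 1 < |(x : ℤ) - (z : ℤ)| → Pex (x, y) * r0 (x, y) z = 0 := by
  intro x y z h
  by_cases hp : Pex (x, y) = 0
  · simp [hp]
  · have hxy : (x = 0 ∧ y = 0) ∨ (x = 2 ∧ y = 2) ∨ (x = 4 ∧ y = 4) := by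
      by_contra hc
      push_neg at hc
      apply hp
      simp only [Pex, Prod.mk.injEq]
      rw [if_neg]
      rintro (⟨h1, h2⟩ | ⟨h1, h2⟩ | ⟨h1, h2⟩) <;> simp_all
    rcases hxy with ⟨hx, hy⟩ | ⟨hx, hy⟩ | ⟨hx, hy⟩ <;> subst hx <;> subst hy <;>
      fin_cases z <;> first | exact absurd h (by decide) | simp [Pex, r0, Prod.ext_iff]

lemma r0_ent : condEntYZ (jointYZ r0) = h2 (1/3) := by
  rw [expandA (jointYZ r0)
    (by intro z; simp [jointYZ, Pex, Fin.sum_univ_five])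
    (by intro z; simp [jointYZ, Pex, Fin.sum_univ_five])
    (by simp [jointYZ, Pex, r0, Fin.sum_univ_five, Prod.ext_iff])
    (by simp [jointYZ, Pex, r0, Fin.sum_univ_five, Prod.ext_iff])
    (by simp [jointYZ, Pex, r0, Fin.sum_univ_five, Prod.ext_iff])
    (by simp [jointYZ, Pex, r0, Fin.sum_univ_five, Prod.ext_iff])
    (by simp [jointYZ, Pex, r0, Fin.sum_univ_five, Prod.ext_iff])
    (by simp [jointYZ, Pex, r0, Fin.sum_univ_five, Prod.ext_iff])
    (by simp [jointYZ, Pex, r0, Fin.sum_univ_five, Prod.ext_iff])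
    (by simp [jointYZ, Pex, r0, Fin.sum_univ_five, Prod.ext_iff])]
  have j01 : jointYZ r0 (0,1) = 1/3 := by
    simp [jointYZ, Pex, r0, Fin.sum_univ_five, Prod.ext_iff]
  have j21 : jointYZ r0 (2,1) = 1/6 := by
    simp [jointYZ, Pex, r0, Fin.sum_univ_five, Prod.ext_iff]; norm_num
  have j23 : jointYZ r0 (2,3) = 1/6 := by
    simp [jointYZ, Pex, r0, Fin.sum_univ_five, Prod.ext_iff]; norm_num
  have j43 : jointYZ r0 (4,3) = 1/3 := by
    simp [jointYZ, Pex, r0, Fin.sum_univ_five, Prod.ext_iff]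
  rw [j01, j21, j23, j43]
  unfold phi h2
  norm_num
  ring

/-! ### Upper bound for stochastic attacks -/

lemma stoch_ub (r : Fin 5 × Fin 5 → Fin 5 → ℝ) (hch : IsChannel r)
    (hz : ∀ x y z : Fin 5, 1 < |(x : ℤ) - (z : ℤ)| → Pex (x, y) * r (x, y) z = 0) :
    condEntYZ (jointYZ r) ≤ h2 (1/3) := by
  have hzero : ∀ (x z : Fin 5), 1 < |(x : ℤ) - (z : ℤ)| → Pex (x, x) * r (x, x) z = 0 :=
    fun x z h => hz x x z h
  rw [expandA (jointYZ r)
    (by intro z; simp [jointYZ, Pex, Fin.sum_univ_five])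
    (by intro z; simp [jointYZ, Pex, Fin.sum_univ_five])
    (by have h := hz 0 0 2 (by decide); simp [jointYZ, Pex, Fin.sum_univ_five] at h ⊢; try simpa [Pex] using h)
    (by have h := hz 0 0 3 (by decide); simp [jointYZ, Pex, Fin.sum_univ_five] at h ⊢; try simpa [Pex] using h)
    (by have h := hz 0 0 4 (by decide); simp [jointYZ, Pex, Fin.sum_univ_five] at h ⊢; try simpa [Pex] using h)
    (by have h := hz 2 2 0 (by decide); simp [jointYZ, Pex, Fin.sum_univ_five] at h ⊢; try simpa [Pex] using h)
    (by have h := hz 2 2 4 (by decide); simp [jointYZ, Pex, Fin.sum_univ_five] at h ⊢; try simpa [Pex] using h)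
    (by have h := hz 4 4 0 (by decide); simp [jointYZ, Pex, Fin.sum_univ_five] at h ⊢; try simpa [Pex] using h)
    (by have h := hz 4 4 1 (by decide); simp [jointYZ, Pex, Fin.sum_univ_five] at h ⊢; try simpa [Pex] using h)
    (by have h := hz 4 4 2 (by decide); simp [jointYZ, Pex, Fin.sum_univ_five] at h ⊢; try simpa [Pex] using h)]
  -- values
  have eb : jointYZ r (0,1) = 1/3 * r 0 1 := by
    simp [jointYZ, Pex, Fin.sum_univ_five]; try ring
    rfl
  have ec : jointYZ r (2,1) = 1/3 * r (2,2) 1 := by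
    simp [jointYZ, Pex, Fin.sum_univ_five]; try ring
  have ee : jointYZ r (2,3) = 1/3 * r (2,2) 3 := by
    simp [jointYZ, Pex, Fin.sum_univ_five]; try ring
  have ef : jointYZ r (4,3) = 1/3 * r (4,4) 3 := by
    simp [jointYZ, Pex, Fin.sum_univ_five]; try ring
  set b := jointYZ r (0,1) with hbdef
  set c := jointYZ r (2,1) with hcdef
  set e := jointYZ r (2,3) with hedef
  set f := jointYZ r (4,3) with hfdef
  have hb0 : 0 ≤ b := by rw [eb]; have := hch.1 0 1; positivity
  have hc0 : 0 ≤ c := by rw [ec]; have := hch.1 (2,2) 1; positivity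
  have he0 : 0 ≤ e := by rw [ee]; have := hch.1 (2,2) 3; positivity
  have hf0 : 0 ≤ f := by rw [ef]; have := hch.1 (4,4) 3; positivity
  have hb1 : b ≤ 1/3 := by
    have hs := hch.2 0
    have hn := hch.1 0
    rw [Fin.sum_univ_five] at hs
    have h0 := hn 0; have h2 := hn 2; have h3 := hn 3; have h4 := hn 4
    rw [eb]; linarith
  have hce : c + e ≤ 1/3 := by
    have hs := hch.2 (2,2)
    have hn := hch.1 (2,2)
    rw [Fin.sum_univ_five] at hs
    have h0 := hn 0; have h2 := hn 2; have h4 := hn 4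
    rw [ec, ee]; linarith
  have hf1 : f ≤ 1/3 := by
    have hs := hch.2 (4,4)
    have hn := hch.1 (4,4)
    rw [Fin.sum_univ_five] at hs
    have h0 := hn 0; have h1 := hn 1; have h2 := hn 2; have h4 := hn 4
    rw [ef]; linarith
  have k1 : phi b c ≤ b * Real.log (3/2) + c * Real.log 3 := phiB b c hb0 hc0
  have k2 : phi e f ≤ f * Real.log (3/2) + e * Real.log 3 := by
    rw [phi_comm]; exact phiB f e hf0 he0
  have l32 : Real.log (3/2 : ℝ) = Real.log 3 - Real.log 2 :=
    Real.log_div (by norm_num) (by norm_num)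
  have hl2 : 0 ≤ Real.log 2 := Real.log_nonneg (by norm_num)
  have hl32 : 0 ≤ Real.log (3/2 : ℝ) := Real.log_nonneg (by norm_num)
  have hl3 : 0 ≤ Real.log (3:ℝ) := Real.log_nonneg (by norm_num)
  rw [h2_third]
  nlinarith [mul_le_mul_of_nonneg_right hb1 hl32, mul_le_mul_of_nonneg_right hf1 hl32,
    mul_le_mul_of_nonneg_right hce hl3]

/-! ### The deterministic side -/

def g0 : Fin 5 × Fin 5 → Fin 5 := fun p => if p.1 = 4 then 3 else 1

lemma g0_dist : ∀ x y : Fin 5, Pex (x, y) ≠ 0 → |(x : ℤ) - (g0 (x, y) : ℤ)| ≤ 1 := by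
  intro x y hp
  fin_cases x <;> simp_all [g0, Pex, Prod.ext_iff] <;> decide

lemma g0_ent : condEntYZ (jointYZdet g0) = (2/3) * Real.log 2 := by
  rw [expandA (jointYZdet g0)
    (by intro z; simp [jointYZdet, Pex, Fin.sum_univ_five])
    (by intro z; simp [jointYZdet, Pex, Fin.sum_univ_five])
    (by simp [jointYZdet, Pex, g0, Fin.sum_univ_five, Prod.ext_iff])
    (by simp [jointYZdet, Pex, g0, Fin.sum_univ_five, Prod.ext_iff])
    (by simp [jointYZdet, Pex, g0, Fin.sum_univ_five, Prod.ext_iff])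
    (by simp [jointYZdet, Pex, g0, Fin.sum_univ_five, Prod.ext_iff])
    (by simp [jointYZdet, Pex, g0, Fin.sum_univ_five, Prod.ext_iff])
    (by simp [jointYZdet, Pex, g0, Fin.sum_univ_five, Prod.ext_iff])
    (by simp [jointYZdet, Pex, g0, Fin.sum_univ_five, Prod.ext_iff])
    (by simp [jointYZdet, Pex, g0, Fin.sum_univ_five, Prod.ext_iff])]
  have j01 : jointYZdet g0 (0,1) = 1/3 := by
    simp [jointYZdet, Pex, g0, Fin.sum_univ_five, Prod.ext_iff]
  have j21 : jointYZdet g0 (2,1) = 1/3 := by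
    simp [jointYZdet, Pex, g0, Fin.sum_univ_five, Prod.ext_iff]
  have j23 : jointYZdet g0 (2,3) = 0 := by
    simp [jointYZdet, Pex, g0, Fin.sum_univ_five, Prod.ext_iff]
  have j43 : jointYZdet g0 (4,3) = 1/3 := by
    simp [jointYZdet, Pex, g0, Fin.sum_univ_five, Prod.ext_iff]
  rw [j01, j21, j23, j43, phi_third, phi_left0, add_zero]

lemma det_ub (g : Fin 5 × Fin 5 → Fin 5)
    (hg : ∀ x y : Fin 5, Pex (x, y) ≠ 0 → |(x : ℤ) - (g (x, y) : ℤ)| ≤ 1) :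
    condEntYZ (jointYZdet g) ≤ (2/3) * Real.log 2 := by
  have h0 := hg 0 0 (by simp [Pex])
  have h2 := hg 2 2 (by simp [Pex])
  have h4 := hg 4 4 (by simp [Pex])
  rw [abs_le] at h0 h2 h4
  have hv0 : g (0,0) = 0 ∨ g (0,0) = 1 := by
    have hlt := (g (0,0)).isLt
    rcases h0 with ⟨ha, hb⟩
    have : (g (0,0)).val = 0 ∨ (g (0,0)).val = 1 := by omega
    rcases this with h | h
    · left; exact Fin.ext h
    · right; exact Fin.ext h
  have hv2 : g (2,2) = 1 ∨ g (2,2) = 2 ∨ g (2,2) = 3 := by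
    have hlt := (g (2,2)).isLt
    rcases h2 with ⟨ha, hb⟩
    have : (g (2,2)).val = 1 ∨ (g (2,2)).val = 2 ∨ (g (2,2)).val = 3 := by omega
    rcases this with h | h | h
    · left; exact Fin.ext h
    · right; left; exact Fin.ext h
    · right; right; exact Fin.ext h
  have hv4 : g (4,4) = 3 ∨ g (4,4) = 4 := by
    have hlt := (g (4,4)).isLt
    rcases h4 with ⟨ha, hb⟩
    have : (g (4,4)).val = 3 ∨ (g (4,4)).val = 4 := by omega
    rcases this with h | h
    · left; exact Fin.ext h
    · right; exact Fin.ext h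
  rw [expandA (jointYZdet g)
    (by intro z; simp [jointYZdet, Pex, Fin.sum_univ_five])
    (by intro z; simp [jointYZdet, Pex, Fin.sum_univ_five])
    (by rcases hv0 with h | h <;> simp [jointYZdet, Pex, Fin.sum_univ_five, h, show g 0 = _ from h, Prod.ext_iff])
    (by rcases hv0 with h | h <;> simp [jointYZdet, Pex, Fin.sum_univ_five, h, show g 0 = _ from h, Prod.ext_iff])
    (by rcases hv0 with h | h <;> simp [jointYZdet, Pex, Fin.sum_univ_five, h, show g 0 = _ from h, Prod.ext_iff])
    (by rcases hv2 with h | h | h <;> simp [jointYZdet, Pex, Fin.sum_univ_five, h, Prod.ext_iff])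
    (by rcases hv2 with h | h | h <;> simp [jointYZdet, Pex, Fin.sum_univ_five, h, Prod.ext_iff])
    (by rcases hv4 with h | h <;> simp [jointYZdet, Pex, Fin.sum_univ_five, h, Prod.ext_iff])
    (by rcases hv4 with h | h <;> simp [jointYZdet, Pex, Fin.sum_univ_five, h, Prod.ext_iff])
    (by rcases hv4 with h | h <;> simp [jointYZdet, Pex, Fin.sum_univ_five, h, Prod.ext_iff])]
  have hb : jointYZdet g (0,1) = 0 ∨ jointYZdet g (0,1) = 1/3 := by
    rcases hv0 with h | h <;> simp [jointYZdet, Pex, Fin.sum_univ_five, h, show g 0 = _ from h, Prod.ext_iff]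
  have hc : jointYZdet g (2,1) = 0 ∨ jointYZdet g (2,1) = 1/3 := by
    rcases hv2 with h | h | h <;> simp [jointYZdet, Pex, Fin.sum_univ_five, h, Prod.ext_iff]
  have he : jointYZdet g (2,3) = 0 ∨ jointYZdet g (2,3) = 1/3 := by
    rcases hv2 with h | h | h <;> simp [jointYZdet, Pex, Fin.sum_univ_five, h, Prod.ext_iff]
  have hf : jointYZdet g (4,3) = 0 ∨ jointYZdet g (4,3) = 1/3 := by
    rcases hv4 with h | h <;> simp [jointYZdet, Pex, Fin.sum_univ_five, h, Prod.ext_iff]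
  have hlog : 0 ≤ Real.log 2 := Real.log_nonneg (by norm_num)
  have hK1 : phi (jointYZdet g (0,1)) (jointYZdet g (2,1)) ≤ (2/3) * Real.log 2 :=
    phiD _ _ hb hc
  have hK2 : phi (jointYZdet g (2,3)) (jointYZdet g (4,3)) ≤ (2/3) * Real.log 2 :=
    phiD _ _ he hf
  -- c and e cannot both be 1/3
  rcases hc with hc' | hc'
  · rw [phi_comm, hc', phi_left0]
    linarith
  · have he' : jointYZdet g (2,3) = 0 := by
      have hg2 : g (2,2) = 1 := by
        rcases hv2 with h | h | h
        · exact h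
        · exfalso; rw [show jointYZdet g (2,1) = 0 from by
            simp [jointYZdet, Pex, Fin.sum_univ_five, h, Prod.ext_iff]] at hc'
          norm_num at hc'
        · exfalso; rw [show jointYZdet g (2,1) = 0 from by
            simp [jointYZdet, Pex, Fin.sum_univ_five, h, Prod.ext_iff]] at hc'
          norm_num at hc'
      simp [jointYZdet, Pex, Fin.sum_univ_five, hg2, Prod.ext_iff]
    rw [he', phi_left0]
    linarith

/-! ### Main theorem -/

theorem stochastic_attack_beats_deterministic :
    sSup {v : ℝ | ∃ r : Fin 5 × Fin 5 → Fin 5 → ℝ, IsChannel r ∧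
        (∀ x y z : Fin 5, 1 < |(x : ℤ) - (z : ℤ)| → Pex (x, y) * r (x, y) z = 0) ∧
        v = condEntYZ (jointYZ r)} = h2 (1/3) ∧
    sSup {v : ℝ | ∃ g : Fin 5 × Fin 5 → Fin 5,
        (∀ x y : Fin 5, Pex (x, y) ≠ 0 → |(x : ℤ) - (g (x, y) : ℤ)| ≤ 1) ∧
        v = condEntYZ (jointYZdet g)} = (2/3) * Real.log 2 ∧
    (2/3) * Real.log 2 < h2 (1/3) := by
  refine ⟨?_, ?_, key_lt⟩
  · apply IsGreatest.csSup_eq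
    constructor
    · exact ⟨r0, r0_channel, r0_dist, r0_ent.symm⟩
    · rintro v ⟨r, hch, hz, rfl⟩
      exact stoch_ub r hch hz
  · apply IsGreatest.csSup_eq
    constructor
    · exact ⟨g0, g0_dist, g0_ent.symm⟩
    · rintro v ⟨g, hg, rfl⟩
      exact det_ub g hg
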